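/- Let s > 0 and let f : [-1,1] → ℝ be a continuous function of class X^s. Then there is a constant C > 0 (depending only on f and s) such that for every n ≥ 1 the error of the n-point Gauss rule satisfies |E_n^G(f)| ≤ C · n^{−s}. -/

import Mathlib

/-- The `m`-th Chebyshev coefficient of `f`:
`a_m = (2/π) ∫_0^π f(cos θ) cos(mθ) dθ`. -/
noncomputable def chebCoeff (f : ℝ → ℝ) (m : ℕ) : ℝ :=
  (2 / Real.pi) * ∫ θ in (0:ℝ)..Real.pi, f (Real.cos θ) * Real.cos (m * θ)

namespace GaussAux

open Real Complex intervalIntegral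

/-! ### Elementary integral symmetry -/

lemma symm_int (h : ℝ → ℝ) (hh : Continuous h) (e : ℝ)
    (hsymm : ∀ x, h (2 * π - x) = e * h x) :
    ∫ x in (0:ℝ)..(2*π), h x = (1 + e) * ∫ x in (0:ℝ)..π, h x := by
  have h1 : (∫ x in (0:ℝ)..π, h x) + ∫ x in π..(2*π), h x = ∫ x in (0:ℝ)..(2*π), h x :=
    integral_add_adjacent_intervals (hh.intervalIntegrable _ _) (hh.intervalIntegrable _ _)
  have h2 : ∫ x in π..(2*π), h x = e * ∫ x in (0:ℝ)..π, h x := by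
    have h3 := integral_comp_sub_left (a := 0) (b := π) h (2*π)
    have h4 : ∫ x in (0:ℝ)..π, h (2*π - x) = e * ∫ x in (0:ℝ)..π, h x := by
      simp_rw [hsymm]; exact integral_const_mul e h
    rw [h4] at h3
    rw [h3]; congr 1 <;> ring
  linarith

/-! ### Chebyshev polynomial degree -/

lemma chebT_natDegree_le : ∀ m : ℕ, (Polynomial.Chebyshev.T ℝ (m : ℤ)).natDegree ≤ m := by
  intro m
  induction m using Nat.strong_induction_on with
  | _ m ih =>
    match m with
    | 0 => simp
    | 1 => simp
    | (k+2) =>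
      have h1 := ih (k+1) (by omega)
      have h0 := ih k (by omega)
      have hT : Polynomial.Chebyshev.T ℝ ((k+2 : ℕ) : ℤ)
          = 2 * Polynomial.X * Polynomial.Chebyshev.T ℝ ((k:ℤ) + 1)
            - Polynomial.Chebyshev.T ℝ (k:ℤ) := by
        push_cast
        exact Polynomial.Chebyshev.T_add_two ℝ (k:ℤ)
      rw [hT]
      refine le_trans (Polynomial.natDegree_sub_le _ _) (max_le ?_ (by omega))
      refine le_trans (Polynomial.natDegree_mul_le) ?_
      have hcast : ((k:ℤ) + 1) = ((k + 1 : ℕ) : ℤ) := by push_cast; ring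
      rw [hcast]
      have h2 : (2 * Polynomial.X : Polynomial ℝ).natDegree ≤ 1 := by
        refine le_trans (Polynomial.natDegree_mul_le) ?_
        simp [Polynomial.natDegree_X_le]
      omega

/-! ### Pairing sums over symmetric integer intervals -/

lemma sum_Icc_neg (N : ℕ) (h : ℤ → ℂ) :
    ∑ i ∈ Finset.Icc (-(N:ℤ)) (N:ℤ), h i
      = h 0 + ∑ m ∈ Finset.Icc 1 N, (h m + h (-(m:ℤ))) := by
  induction N with
  | zero => simp
  | succ n ih =>
    have e1 : Finset.Icc (-((n+1:ℕ):ℤ)) ((n+1:ℕ):ℤ)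
        = insert ((n+1:ℕ):ℤ) (insert (-((n+1:ℕ):ℤ)) (Finset.Icc (-(n:ℤ)) (n:ℤ))) := by
      ext i; simp only [Finset.mem_Icc, Finset.mem_insert]; omega
    have e2 : Finset.Icc 1 (n+1) = insert (n+1) (Finset.Icc 1 n) := by
      ext i; simp only [Finset.mem_Icc, Finset.mem_insert]; omega
    rw [e1, Finset.sum_insert (by simp only [Finset.mem_Icc, Finset.mem_insert]; omega),
      Finset.sum_insert (by simp only [Finset.mem_Icc]; omega), e2,
      Finset.sum_insert (by simp only [Finset.mem_Icc]; omega), ih]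
    push_cast
    ring

/-! ### Tail sums of `m ^ (-s-1)` -/

lemma summable_tail (s : ℝ) (hs : 0 < s) :
    Summable (fun m : ℕ => (m:ℝ) ^ (-s-1)) := by
  rw [Real.summable_nat_rpow]; linarith

lemma tail_bound (s : ℝ) (hs : 0 < s) (N : ℕ) (hN : 1 ≤ N) :
    ∑' k : ℕ, ((N + 1 + k : ℕ) : ℝ) ^ (-s-1) ≤ (N:ℝ) ^ (-s) / s := by
  have hsum : Summable (fun k : ℕ => ((N + 1 + k : ℕ) : ℝ) ^ (-s-1)) := by
    have := (summable_nat_add_iff (f := fun m : ℕ => (m:ℝ) ^ (-s-1)) (N+1)).2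
      (summable_tail s hs)
    refine this.congr fun k => by rw [add_comm k (N+1)]
  refine Summable.tsum_le_of_sum_le hsum fun F => ?_
  obtain ⟨M, hM⟩ := F.exists_nat_subset_range
  have hnn : ∀ k : ℕ, 0 ≤ ((N + 1 + k : ℕ) : ℝ) ^ (-s-1) := fun k => rpow_nonneg (by positivity) _
  refine le_trans (Finset.sum_le_sum_of_subset_of_nonneg hM fun k _ _ => hnn k) ?_
  have hanti : AntitoneOn (fun x : ℝ => x ^ (-s-1)) (Set.Icc (N:ℝ) ((N:ℝ) + M)) := by
    intro a ha b hb hab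
    have ha0 : (0:ℝ) < a := lt_of_lt_of_le (by exact_mod_cast hN) ha.1
    exact rpow_le_rpow_of_nonpos ha0 hab (by linarith)
  have hint := hanti.sum_le_integral
  have key : ∑ i ∈ Finset.range M, ((N + 1 + i : ℕ) : ℝ) ^ (-s-1)
      ≤ ∫ x in (N:ℝ)..((N:ℝ) + M), x ^ (-s-1) := by
    refine le_trans (le_of_eq (Finset.sum_congr rfl fun i _ => ?_)) hint
    push_cast
    ring_nf
  refine key.trans ?_
  have hN1 : (1:ℝ) ≤ (N:ℝ) := by exact_mod_cast hN
  have hM0 : (0:ℝ) ≤ (M:ℝ) := Nat.cast_nonneg M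
  rw [integral_rpow (Or.inr ⟨by intro h; linarith, by
      intro h
      rcases Set.mem_uIcc.1 h with ⟨h1, _⟩ | ⟨h2, _⟩ <;> linarith⟩)]
  have h1 : -s - 1 + 1 = -s := by ring
  rw [h1]
  have h2 : (0:ℝ) ≤ ((N:ℝ) + M) ^ (-s) := rpow_nonneg (by positivity) _
  have h3 : (((N:ℝ) + M) ^ (-s) - (N:ℝ) ^ (-s)) / (-s)
      = ((N:ℝ) ^ (-s) - ((N:ℝ) + M) ^ (-s)) / s := by
    rw [div_neg, ← neg_div]
    ring_nf
  rw [h3, div_le_div_iff_of_pos_right hs]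
  linarith

/-! ### Abstract summability and tail estimate for coefficient-like functions -/

section
variable {s A₀ : ℝ} (hs : 0 < s) (hA₀ : 0 ≤ A₀) (r : ℤ → ℝ)
  (hr_nn : ∀ i, 0 ≤ r i)
  (hr : ∀ i : ℤ, 1 ≤ i.natAbs → r i ≤ (A₀/2) * ((i.natAbs : ℝ)) ^ (-s-1))

include hs hA₀ hr_nn hr

set_option linter.unusedSectionVars false in
lemma summable_r : Summable r := by
  have hbase : Summable (fun n : ℕ => (A₀/2) * ((n+1 : ℕ) : ℝ) ^ (-s-1)) := by
    refine Summable.mul_left _ ?_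
    exact_mod_cast (summable_nat_add_iff (f := fun m : ℕ => (m:ℝ) ^ (-s-1)) 1).2
      (summable_tail s hs)
  apply Summable.of_nat_of_neg_add_one
  · refine (summable_nat_add_iff 1).1 ?_
    refine Summable.of_nonneg_of_le (fun n => hr_nn _) (fun n => ?_) hbase
    have h := hr ((n:ℤ)+1) (by omega)
    have hn : (((n:ℤ)+1).natAbs) = n+1 := by omega
    rw [hn] at h
    exact_mod_cast h
  · refine Summable.of_nonneg_of_le (fun n => hr_nn _) (fun n => ?_) hbase
    have h := hr (-((n:ℤ)+1)) (by omega)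
    have hn : ((-((n:ℤ)+1)).natAbs) = n+1 := by omega
    rw [hn] at h
    exact_mod_cast h

lemma tail_est (N : ℕ) (hN : 1 ≤ N) :
    ∑' j : {i : ℤ // i ∈ (((Finset.Icc (-(N:ℤ)) (N:ℤ)) : Finset ℤ) : Set ℤ)ᶜ}, r j.1
      ≤ A₀ * (N:ℝ) ^ (-s) / s := by
  classical
  set b : ℤ → ℝ := fun i => if N < i.natAbs then (A₀/2) * ((i.natAbs : ℝ)) ^ (-s-1) else 0 with hb
  have hb_nn : ∀ i, 0 ≤ b i := by
    intro i; simp only [hb]; split_ifs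
    · positivity
    · exact le_rfl
  have hb_bound : ∀ i, b i ≤ (A₀/2) * ((i.natAbs : ℝ)) ^ (-s-1) ∨ b i = 0 := by
    intro i; simp only [hb]; split_ifs
    · exact Or.inl le_rfl
    · exact Or.inr rfl
  have hb_sum : Summable b := by
    refine summable_r hs hA₀ b hb_nn (fun i hi => ?_)
    rcases hb_bound i with h | h
    · exact h
    · rw [h]; positivity
  have hnat : ∑' n : ℕ, b n ≤ (A₀/2) * ((N:ℝ) ^ (-s) / s) := by
    have hsm : Summable fun n : ℕ => b n := hb_sum.comp_injective Nat.cast_injective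
    rw [← Summable.sum_add_tsum_nat_add (N+1) hsm]
    have h1 : ∑ i ∈ Finset.range (N+1), b (i:ℤ) = 0 := by
      refine Finset.sum_eq_zero fun i hi => ?_
      have : ¬ (N < ((i:ℤ)).natAbs) := by
        simp only [Finset.mem_range] at hi; omega
      simp only [hb]; rw [if_neg this]
    rw [h1, zero_add]
    have h2 : ∀ k : ℕ, b ((k + (N+1) : ℕ) : ℤ) = (A₀/2) * ((N + 1 + k : ℕ) : ℝ) ^ (-s-1) := by
      intro k
      have hlt : N < (((k + (N+1) : ℕ) : ℤ)).natAbs := by omega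
      have hna : (((k + (N+1) : ℕ) : ℤ)).natAbs = N + 1 + k := by omega
      simp only [hb, if_pos hlt, hna]
    calc ∑' k : ℕ, b ((k + (N+1) : ℕ) : ℤ)
        = ∑' k : ℕ, (A₀/2) * ((N + 1 + k : ℕ) : ℝ) ^ (-s-1) := tsum_congr fun k => h2 k
      _ = (A₀/2) * ∑' k : ℕ, ((N + 1 + k : ℕ) : ℝ) ^ (-s-1) := tsum_mul_left
      _ ≤ (A₀/2) * ((N:ℝ) ^ (-s) / s) :=
          mul_le_mul_of_nonneg_left (tail_bound s hs N hN) (by positivity)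
  have hneg : ∑' n : ℕ, b (-((n:ℤ)+1)) ≤ (A₀/2) * ((N:ℝ) ^ (-s) / s) := by
    have hsm : Summable fun n : ℕ => b (-((n:ℤ)+1)) := by
      refine hb_sum.comp_injective fun a b h => ?_
      omega
    rw [← Summable.sum_add_tsum_nat_add N hsm]
    have h1 : ∑ i ∈ Finset.range N, b (-((i:ℤ)+1)) = 0 := by
      refine Finset.sum_eq_zero fun i hi => ?_
      have : ¬ (N < ((-((i:ℤ)+1))).natAbs) := by
        simp only [Finset.mem_range] at hi; omega
      simp only [hb]; rw [if_neg this]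
    rw [h1, zero_add]
    have h2 : ∀ k : ℕ, b (-(((k + N:ℕ):ℤ)+1)) = (A₀/2) * ((N + 1 + k : ℕ) : ℝ) ^ (-s-1) := by
      intro k
      have hlt : N < ((-(((k + N:ℕ):ℤ)+1))).natAbs := by omega
      have hna : ((-(((k + N:ℕ):ℤ)+1))).natAbs = N + 1 + k := by omega
      simp only [hb, if_pos hlt, hna]
    calc ∑' k : ℕ, b (-(((k + N:ℕ):ℤ)+1))
        = ∑' k : ℕ, (A₀/2) * ((N + 1 + k : ℕ) : ℝ) ^ (-s-1) := tsum_congr fun k => h2 k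
      _ = (A₀/2) * ∑' k : ℕ, ((N + 1 + k : ℕ) : ℝ) ^ (-s-1) := tsum_mul_left
      _ ≤ (A₀/2) * ((N:ℝ) ^ (-s) / s) :=
          mul_le_mul_of_nonneg_left (tail_bound s hs N hN) (by positivity)
  have step1 : ∑' j : {i : ℤ // i ∈ (((Finset.Icc (-(N:ℤ)) (N:ℤ)) : Finset ℤ) : Set ℤ)ᶜ}, r j.1
      ≤ ∑' j : {i : ℤ // i ∈ (((Finset.Icc (-(N:ℤ)) (N:ℤ)) : Finset ℤ) : Set ℤ)ᶜ}, b j.1 := by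
    refine Summable.tsum_le_tsum (fun j => ?_) ((summable_r hs hA₀ r hr_nn hr).subtype _) (hb_sum.subtype _)
    have hj : N < (j.1).natAbs := by
      have := j.2
      simp only [Set.mem_compl_iff, Finset.coe_sort_coe, Finset.mem_coe, Finset.mem_Icc] at this
      omega
    simp only [hb]
    rw [if_pos hj]
    exact hr j.1 (by omega)
  have step2 : ∑' j : {i : ℤ // i ∈ (((Finset.Icc (-(N:ℤ)) (N:ℤ)) : Finset ℤ) : Set ℤ)ᶜ}, b j.1
      ≤ ∑' i : ℤ, b i := Summable.tsum_subtype_le b _ hb_nn hb_sum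
  have step3 : ∑' i : ℤ, b i = (∑' n : ℕ, b n) + ∑' n : ℕ, b (-((n:ℤ)+1)) := by
    refine tsum_of_nat_of_neg_add_one (hb_sum.comp_injective Nat.cast_injective) ?_
    exact hb_sum.comp_injective fun a b h => by omega
  calc ∑' j : {i : ℤ // i ∈ (((Finset.Icc (-(N:ℤ)) (N:ℤ)) : Finset ℤ) : Set ℤ)ᶜ}, r j.1
      ≤ ∑' i : ℤ, b i := step1.trans step2
    _ = (∑' n : ℕ, b n) + ∑' n : ℕ, b (-((n:ℤ)+1)) := step3
    _ ≤ (A₀/2) * ((N:ℝ) ^ (-s) / s) + (A₀/2) * ((N:ℝ) ^ (-s) / s) := add_le_add hnat hneg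
    _ = A₀ * (N:ℝ) ^ (-s) / s := by ring

end

/-! ### The periodized function on the circle -/

noncomputable def gC (f : ℝ → ℝ) : ℝ → ℂ := fun θ => (f (Real.cos θ) : ℂ)

lemma gC_periodic (f : ℝ → ℝ) : Function.Periodic (gC f) (2 * π) := fun x => by
  simp [gC, Real.cos_add_two_pi]

lemma fc_cont {f : ℝ → ℝ} (hf : ContinuousOn f (Set.Icc (-1) 1)) :
    Continuous fun θ => f (Real.cos θ) :=
  hf.comp_continuous Real.continuous_cos fun θ => ⟨Real.neg_one_le_cos θ, Real.cos_le_one θ⟩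

lemma gC_cont {f : ℝ → ℝ} (hf : ContinuousOn f (Set.Icc (-1) 1)) : Continuous (gC f) :=
  Complex.continuous_ofReal.comp (fc_cont hf)

noncomputable def Gmap (f : ℝ → ℝ) (hf : ContinuousOn f (Set.Icc (-1) 1)) :
    C(AddCircle (2 * π), ℂ) :=
  ⟨(gC_periodic f).lift, (gC_cont hf).quotient_liftOn' _⟩

lemma Gmap_coe (f : ℝ → ℝ) (hf : ContinuousOn f (Set.Icc (-1) 1)) (x : ℝ) :
    Gmap f hf (x : AddCircle (2 * π)) = (f (Real.cos x) : ℂ) :=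
  (gC_periodic f).lift_coe x

lemma fourier_val (i : ℤ) (x : ℝ) :
    fourier i (x : AddCircle (2 * π))
      = (Real.cos (i * x) : ℂ) + (Real.sin (i * x) : ℂ) * Complex.I := by
  rw [fourier_coe_apply]
  have h : 2 * (π:ℂ) * Complex.I * (i:ℂ) * (x:ℂ) / ((2 * π : ℝ) : ℂ)
      = (((i:ℝ) * x : ℝ) : ℂ) * Complex.I := by
    have hπ : ((π:ℝ):ℂ) ≠ 0 := by simpa using Real.pi_ne_zero
    push_cast; field_simp
  rw [h, Complex.exp_mul_I, ← Complex.ofReal_cos, ← Complex.ofReal_sin]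

instance : Fact (0 < 2 * π) := ⟨by positivity⟩

lemma cos_int_symm (i : ℤ) (x : ℝ) : Real.cos ((i:ℝ) * (2 * π - x)) = Real.cos ((i:ℝ) * x) := by
  have h : (i:ℝ) * (2 * π - x) = (i:ℝ) * (2 * π) - (i:ℝ) * x := by ring
  have h2 : (i:ℝ) * (2 * π) = ((2*i : ℤ):ℝ) * π := by push_cast; ring
  rw [h, Real.cos_sub, h2, Real.sin_int_mul_pi]
  rw [show ((2*i : ℤ):ℝ) * π = ((i:ℝ)) * (2*π) by push_cast; ring, Real.cos_int_mul_two_pi]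
  ring

lemma sin_int_symm (i : ℤ) (x : ℝ) : Real.sin ((i:ℝ) * (2 * π - x)) = -Real.sin ((i:ℝ) * x) := by
  have h : (i:ℝ) * (2 * π - x) = (i:ℝ) * (2 * π) - (i:ℝ) * x := by ring
  have h2 : (i:ℝ) * (2 * π) = ((2*i : ℤ):ℝ) * π := by push_cast; ring
  rw [h, Real.sin_sub, h2, Real.sin_int_mul_pi]
  rw [show ((2*i : ℤ):ℝ) * π = ((i:ℝ)) * (2*π) by push_cast; ring, Real.cos_int_mul_two_pi]
  ring

lemma cos_natAbs (i : ℤ) (x : ℝ) :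
    Real.cos ((i.natAbs : ℝ) * x) = Real.cos ((i:ℝ) * x) := by
  rw [Nat.cast_natAbs, Int.cast_abs]
  rcases abs_choice ((i:ℝ)) with h | h
  · rw [h]
  · rw [h, neg_mul, Real.cos_neg]

/-! ### Fourier coefficients of the periodized function -/

lemma fourierCoeff_Gmap (f : ℝ → ℝ) (hf : ContinuousOn f (Set.Icc (-1) 1)) (i : ℤ) :
    fourierCoeff (⇑(Gmap f hf)) i = ((chebCoeff f i.natAbs / 2 : ℝ) : ℂ) := by
  set u : ℝ → ℝ := fun x => f (Real.cos x) * Real.cos ((i:ℝ) * x) with hu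
  set v : ℝ → ℝ := fun x => f (Real.cos x) * Real.sin ((i:ℝ) * x) with hv
  have hcu : Continuous u := (fc_cont hf).mul (Real.continuous_cos.comp (by continuity))
  have hcv : Continuous v := (fc_cont hf).mul (Real.continuous_sin.comp (by continuity))
  have hpt : ∀ x : ℝ, fourier (-i) (x : AddCircle (2*π)) • Gmap f hf (x : AddCircle (2*π))
      = ((u x : ℂ) - (v x : ℂ) * Complex.I) := by
    intro x
    rw [fourier_val, Gmap_coe]
    have h1 : ((-i : ℤ) : ℝ) * x = -((i:ℝ) * x) := by push_cast; ring
    rw [h1, Real.cos_neg, Real.sin_neg]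
    simp only [smul_eq_mul, hu, hv]
    push_cast
    ring
  have hI : ∫ x in (0:ℝ)..(2*π),
        fourier (-i) (x : AddCircle (2*π)) • Gmap f hf (x : AddCircle (2*π))
      = ((∫ x in (0:ℝ)..(2*π), u x : ℝ) : ℂ)
        - ((∫ x in (0:ℝ)..(2*π), v x : ℝ) : ℂ) * Complex.I := by
    rw [intervalIntegral.integral_congr (g := fun x => ((u x : ℂ) - (v x : ℂ) * Complex.I))
      (fun x _ => hpt x)]
    rw [intervalIntegral.integral_sub, intervalIntegral.integral_mul_const,
      intervalIntegral.integral_ofReal, intervalIntegral.integral_ofReal]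
    · exact (Complex.continuous_ofReal.comp hcu).intervalIntegrable _ _
    · exact ((Complex.continuous_ofReal.comp hcv).mul continuous_const).intervalIntegrable _ _
  have hU : ∫ x in (0:ℝ)..(2*π), u x = 2 * ∫ x in (0:ℝ)..π, u x := by
    have := symm_int u hcu 1 (fun x => by
      simp only [hu]
      rw [Real.cos_two_pi_sub, cos_int_symm]
      ring)
    rw [this]; ring
  have hV : ∫ x in (0:ℝ)..(2*π), v x = 0 := by
    have := symm_int v hcv (-1) (fun x => by
      simp only [hv]
      rw [Real.cos_two_pi_sub, sin_int_symm]
      ring)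
    rw [this]; ring
  rw [fourierCoeff_eq_intervalIntegral _ i 0]
  rw [show (0:ℝ) + 2*π = 2*π by ring] at *
  rw [hI, hU, hV]
  simp only [Complex.ofReal_zero, zero_mul, sub_zero]
  rw [Complex.real_smul]
  rw [← Complex.ofReal_mul]
  congr 1
  have hJ : ∫ θ in (0:ℝ)..π, f (Real.cos θ) * Real.cos ((i.natAbs : ℝ) * θ)
      = ∫ x in (0:ℝ)..π, u x := by
    refine intervalIntegral.integral_congr fun x _ => ?_
    simp only [hu]
    rw [cos_natAbs]
  rw [chebCoeff, hJ]
  have hπ : (π:ℝ) ≠ 0 := Real.pi_ne_zero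
  field_simp

/-! ### The Chebyshev partial sum as a polynomial -/

noncomputable def chebP (f : ℝ → ℝ) (N : ℕ) : Polynomial ℝ :=
  Polynomial.C (chebCoeff f 0 / 2) +
    ∑ m ∈ Finset.Icc 1 N, Polynomial.C (chebCoeff f m) * Polynomial.Chebyshev.T ℝ (m:ℤ)

lemma chebP_natDegree_le (f : ℝ → ℝ) (N : ℕ) : (chebP f N).natDegree ≤ N := by
  refine le_trans (Polynomial.natDegree_add_le _ _) (max_le (by simp) ?_)
  refine Polynomial.natDegree_sum_le_of_forall_le _ _ fun m hm => ?_
  refine le_trans (Polynomial.natDegree_mul_le) ?_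
  have h1 := chebT_natDegree_le m
  have h2 := (Finset.mem_Icc.1 hm).2
  simp only [Polynomial.natDegree_C]
  omega

lemma chebP_eval_cos (f : ℝ → ℝ) (N : ℕ) (θ : ℝ) : (chebP f N).eval (Real.cos θ) =
    chebCoeff f 0 / 2 + ∑ m ∈ Finset.Icc 1 N, chebCoeff f m * Real.cos (m * θ) := by
  simp only [chebP, Polynomial.eval_add, Polynomial.eval_C, Polynomial.eval_finset_sum,
    Polynomial.eval_mul]
  congr 1
  refine Finset.sum_congr rfl fun m hm => ?_
  rw [Polynomial.Chebyshev.T_real_cos]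
  norm_cast

lemma partial_eval (f : ℝ → ℝ) (hf : ContinuousOn f (Set.Icc (-1) 1)) (N : ℕ) (θ : ℝ) :
    (∑ i ∈ Finset.Icc (-(N:ℤ)) (N:ℤ),
        fourierCoeff (⇑(Gmap f hf)) i • fourier (T := 2*π) i) (θ : AddCircle (2*π))
      = ((((chebP f N).eval (Real.cos θ) : ℝ)) : ℂ) := by
  rw [ContinuousMap.coe_sum, Finset.sum_apply]
  simp only [ContinuousMap.coe_smul, Pi.smul_apply, smul_eq_mul]
  rw [sum_Icc_neg N (fun i => fourierCoeff (⇑(Gmap f hf)) i * fourier i (θ : AddCircle (2*π)))]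
  rw [chebP_eval_cos]
  push_cast
  congr 1
  · rw [fourierCoeff_Gmap, fourier_val]
    norm_num
  · refine Finset.sum_congr rfl fun m hm => ?_
    have h1 : ((m:ℤ)).natAbs = m := by omega
    have h2 : ((-(m:ℤ))).natAbs = m := by omega
    rw [fourierCoeff_Gmap, fourierCoeff_Gmap, h1, h2, fourier_val, fourier_val]
    have h3 : (((-(m:ℤ)) : ℤ) : ℝ) = -(((m:ℤ)):ℝ) := by push_cast; ring
    rw [h3, neg_mul, Real.cos_neg, Real.sin_neg]
    push_cast
    ring

end GaussAux

/-- If `f` is continuous on `[-1,1]` and of class `X^s` with `s > 0`, then the error of the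
`n`-point Gauss rule is `O(n^{-s})`. -/
theorem gauss_rate_suboptimal (s : ℝ) (hs : 0 < s) (f : ℝ → ℝ)
    (hf : ContinuousOn f (Set.Icc (-1) 1))
    (hXs : ∃ A : ℝ, ∀ m : ℕ, 1 ≤ m → |chebCoeff f m| ≤ A * (m : ℝ) ^ (-s - 1)) :
    ∃ C > 0, ∀ n : ℕ, 1 ≤ n → ∀ x w : Fin n → ℝ,
      (∀ k, x k ∈ Set.Icc (-1:ℝ) 1) → (∀ k, 0 < w k) →
      (∀ p : Polynomial ℝ, p.natDegree ≤ 2 * n - 1 →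
        ∑ k : Fin n, w k * p.eval (x k) = ∫ t in (-1:ℝ)..1, p.eval t) →
      |(∫ t in (-1:ℝ)..1, f t) - ∑ k : Fin n, w k * f (x k)| ≤ C * (n : ℝ) ^ (-s) := by
  classical
  open GaussAux Real in
  obtain ⟨A, hA⟩ := hXs
  set A₀ : ℝ := |A| with hA₀def
  have hA₀ : 0 ≤ A₀ := abs_nonneg A
  have h_a : ∀ m : ℕ, 1 ≤ m → |chebCoeff f m| ≤ A₀ * (m:ℝ) ^ (-s-1) := by
    intro m hm
    refine (hA m hm).trans
      (mul_le_mul_of_nonneg_right (le_abs_self A) (rpow_nonneg (by positivity) _))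
  refine ⟨4 * A₀ / s + 1, by positivity, ?_⟩
  intro n hn x w hx hw hexact
  set N : ℕ := 2 * n - 1 with hNdef
  have hN1 : 1 ≤ N := by omega
  have hnN : n ≤ N := by omega
  set c : ℤ → ℂ := fourierCoeff (⇑(Gmap f hf)) with hcdef
  have hc : ∀ i, c i = ((chebCoeff f i.natAbs / 2 : ℝ) : ℂ) := fourierCoeff_Gmap f hf
  set r : ℤ → ℝ := fun i => ‖c i‖ with hrdef
  have hr_nn : ∀ i, 0 ≤ r i := fun i => norm_nonneg _
  have hr : ∀ i : ℤ, 1 ≤ i.natAbs → r i ≤ (A₀/2) * ((i.natAbs : ℝ)) ^ (-s-1) := by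
    intro i hi
    have h1 : r i = |chebCoeff f i.natAbs| / 2 := by
      rw [hrdef]
      simp only [hc i, Complex.norm_real, Real.norm_eq_abs, abs_div, abs_two]
    rw [h1]
    have h2 := h_a i.natAbs hi
    linarith
  have hsum_r : Summable r := summable_r hs hA₀ r hr_nn hr
  have hsum_c : Summable c := Summable.of_norm hsum_r
  have hS : HasSum (fun i => c i • fourier (T := 2*π) i) (Gmap f hf) :=
    hasSum_fourier_series_of_summable hsum_c
  set Pc : C(AddCircle (2*π), ℂ) :=
    ∑ i ∈ Finset.Icc (-(N:ℤ)) (N:ℤ), c i • fourier i with hPcdef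
  have hF_norm : ∀ i : ℤ, ‖c i • fourier (T := 2*π) i‖ = r i := by
    intro i; rw [norm_smul, fourier_norm, mul_one, hrdef]
  have hsumF : Summable (fun i => c i • fourier (T := 2*π) i) := hS.summable
  have hsplit := Summable.sum_add_tsum_compl (s := Finset.Icc (-(N:ℤ)) (N:ℤ)) hsumF
  rw [hS.tsum_eq] at hsplit
  have hdiff : Gmap f hf - Pc
      = ∑' i : {i : ℤ // i ∈ (((Finset.Icc (-(N:ℤ)) (N:ℤ)) : Finset ℤ) : Set ℤ)ᶜ},
          c i.1 • fourier (T := 2*π) i.1 := by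
    rw [← hsplit, hPcdef, add_sub_cancel_left]
  set ε : ℝ := ‖Gmap f hf - Pc‖ with hεdef
  have hεnn : 0 ≤ ε := norm_nonneg _
  have htail : ε ≤ A₀ * (n:ℝ) ^ (-s) / s := by
    have h1 : ε ≤ ∑' j : {i : ℤ // i ∈ (((Finset.Icc (-(N:ℤ)) (N:ℤ)) : Finset ℤ) : Set ℤ)ᶜ},
        r j.1 := by
      rw [hεdef, hdiff]
      refine le_trans (norm_tsum_le_tsum_norm
        ((hsum_r.subtype _).congr fun j => (hF_norm j.1).symm)) ?_
      exact le_of_eq (tsum_congr fun j => hF_norm j.1)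
    refine (h1.trans (tail_est hs hA₀ r hr_nn hr N hN1)).trans ?_
    have hmono : (N:ℝ) ^ (-s) ≤ (n:ℝ) ^ (-s) := by
      refine rpow_le_rpow_of_nonpos ?_ (by exact_mod_cast hnN) (by linarith)
      exact_mod_cast Nat.pos_of_ne_zero (by omega)
    have : 0 ≤ A₀ / s := by positivity
    calc A₀ * (N:ℝ) ^ (-s) / s = (A₀/s) * (N:ℝ) ^ (-s) := by ring
      _ ≤ (A₀/s) * (n:ℝ) ^ (-s) := mul_le_mul_of_nonneg_left hmono this
      _ = A₀ * (n:ℝ) ^ (-s) / s := by ring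
  set p : Polynomial ℝ := chebP f N with hpdef
  have hsup : ∀ t ∈ Set.Icc (-1:ℝ) 1, |f t - p.eval t| ≤ ε := by
    intro t ht
    have hcos : Real.cos (Real.arccos t) = t := Real.cos_arccos ht.1 ht.2
    have e1 : ((f t - p.eval t : ℝ) : ℂ)
        = (Gmap f hf - Pc) ((Real.arccos t : ℝ) : AddCircle (2*π)) := by
      rw [ContinuousMap.sub_apply, Gmap_coe, hcos, hPcdef, hcdef,
        partial_eval f hf N (Real.arccos t), hcos]
      push_cast
      ring
    calc |f t - p.eval t| = ‖((f t - p.eval t : ℝ) : ℂ)‖ := by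
          rw [Complex.norm_real, Real.norm_eq_abs]
      _ = ‖(Gmap f hf - Pc) ((Real.arccos t : ℝ) : AddCircle (2*π))‖ := by rw [e1]
      _ ≤ ε := ContinuousMap.norm_coe_le_norm _ _
  have hdeg : p.natDegree ≤ 2 * n - 1 := chebP_natDegree_le f N
  have hpint := hexact p hdeg
  have hone : (∑ k, w k) = 2 := by
    have h1 := hexact 1 (by simp)
    simp only [Polynomial.eval_one, mul_one] at h1
    rw [h1]
    norm_num
  have hfi : IntervalIntegrable f MeasureTheory.volume (-1) 1 := by
    apply ContinuousOn.intervalIntegrable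
    rwa [Set.uIcc_of_le (by norm_num : (-1:ℝ) ≤ 1)]
  have hpi : IntervalIntegrable (fun t => p.eval t) MeasureTheory.volume (-1) 1 :=
    (p.continuous_aeval ..).intervalIntegrable _ _
  have part1 : |(∫ t in (-1:ℝ)..1, f t) - ∫ t in (-1:ℝ)..1, p.eval t| ≤ ε * 2 := by
    rw [← intervalIntegral.integral_sub hfi hpi]
    have hb : ∀ t ∈ Set.uIoc (-1:ℝ) 1, ‖f t - p.eval t‖ ≤ ε := by
      intro t ht
      rw [Set.uIoc_of_le (by norm_num : (-1:ℝ) ≤ 1)] at ht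
      rw [Real.norm_eq_abs]
      exact hsup t (Set.Ioc_subset_Icc_self ht)
    have := intervalIntegral.norm_integral_le_of_norm_le_const hb
    rw [Real.norm_eq_abs] at this
    calc |∫ t in (-1:ℝ)..1, (f t - p.eval t)| ≤ ε * |(1:ℝ) - (-1)| := this
      _ = ε * 2 := by norm_num
  have part2 : |(∑ k, w k * f (x k)) - ∑ k, w k * p.eval (x k)| ≤ ε * 2 := by
    rw [← Finset.sum_sub_distrib]
    refine le_trans (Finset.abs_sum_le_sum_abs _ _) ?_
    have hterm : ∀ k, |w k * f (x k) - w k * p.eval (x k)| ≤ w k * ε := by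
      intro k
      rw [← mul_sub, abs_mul, abs_of_pos (hw k)]
      exact mul_le_mul_of_nonneg_left (hsup (x k) (hx k)) (hw k).le
    refine le_trans (Finset.sum_le_sum fun k _ => hterm k) ?_
    rw [← Finset.sum_mul, hone]
    ring_nf
    exact le_rfl
  have final : |(∫ t in (-1:ℝ)..1, f t) - ∑ k, w k * f (x k)| ≤ 4 * ε := by
    have hsplit2 : (∫ t in (-1:ℝ)..1, f t) - ∑ k, w k * f (x k)
        = ((∫ t in (-1:ℝ)..1, f t) - ∫ t in (-1:ℝ)..1, p.eval t)
          + ((∑ k, w k * p.eval (x k)) - ∑ k, w k * f (x k)) := by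
      rw [hpint]; ring
    rw [hsplit2]
    refine le_trans (abs_add_le _ _) ?_
    rw [abs_sub_comm (∑ k, w k * p.eval (x k))]
    linarith
  refine final.trans ?_
  have hpos : 0 < (n:ℝ) ^ (-s) := by
    refine rpow_pos_of_pos ?_ _
    exact_mod_cast Nat.pos_of_ne_zero (by omega)
  calc 4 * ε ≤ 4 * (A₀ * (n:ℝ) ^ (-s) / s) := by linarith
    _ = (4 * A₀ / s) * (n:ℝ) ^ (-s) := by ring
    _ ≤ (4 * A₀ / s + 1) * (n:ℝ) ^ (-s) := by nlinarith
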